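/- Let s, s' be involutions in S_N with s ≤_B s' and l_I(s') − l_I(s) = 1, where l_I(t) = (inv(t)+exc(t))/2. Then the difference of Coxeter lengths inv(s') − inv(s) is equal to 1, 2 or 3. -/

import Mathlib

/-- Number of inversions of a permutation of `Fin N`. -/
def inversions {N : ℕ} (s : Equiv.Perm (Fin N)) : ℕ :=
  (Finset.univ.filter (fun p : Fin N × Fin N => p.1 < p.2 ∧ s p.2 < s p.1)).card

/-- One step of the Bruhat relation: multiply by a transposition, not decreasing inversions. -/
def bruhatStep {N : ℕ} (σ τ : Equiv.Perm (Fin N)) : Prop :=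
  ∃ i j : Fin N, i ≠ j ∧ τ = σ * Equiv.swap i j ∧ inversions σ ≤ inversions τ

/-- The Bruhat order on the symmetric group: reflexive-transitive closure of `bruhatStep`. -/
def bruhatLE {N : ℕ} : Equiv.Perm (Fin N) → Equiv.Perm (Fin N) → Prop :=
  Relation.ReflTransGen bruhatStep

/-- Strict Bruhat order. -/
def bruhatLT {N : ℕ} (σ τ : Equiv.Perm (Fin N)) : Prop := bruhatLE σ τ ∧ σ ≠ τ

/-- Number of excedances of a permutation. -/
def exced {N : ℕ} (s : Equiv.Perm (Fin N)) : ℕ :=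
  (Finset.univ.filter (fun i : Fin N => i < s i)).card

/-- The involution length `l_I`. -/
def lI {N : ℕ} (s : Equiv.Perm (Fin N)) : ℕ := (inversions s + exced s) / 2

open Finset Equiv

section Aux
variable {N : ℕ}

/-- number of non-fixed points -/
def Fm (σ : Equiv.Perm (Fin N)) : ℕ := (Finset.univ.filter (fun p => σ p ≠ p)).card

/-- crossing number at cut `m` -/
def cc (m : ℕ) (σ : Equiv.Perm (Fin N)) : ℕ :=
  (Finset.univ.filter (fun p : Fin N => (p : ℕ) < m ∧ m ≤ (σ p : ℕ))).card

lemma mulswap_apply (σ : Equiv.Perm (Fin N)) (i j p : Fin N) :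
    (σ * Equiv.swap i j) p = if p = i then σ j else if p = j then σ i else σ p := by
  simp only [Equiv.Perm.mul_apply, Equiv.swap_apply_def]
  split_ifs <;> rfl

lemma card_filter_pair_split (P : Fin N → Prop) [DecidablePred P] {i j : Fin N} (hij : i ≠ j) :
    (Finset.univ.filter P).card =
      (((Finset.univ.erase i).erase j).filter P).card +
        ((if P i then 1 else 0) + if P j then 1 else 0) := by
  classical
  have hjmem : j ∈ Finset.univ.erase i := by simp [hij.symm]
  rw [Finset.card_filter, Finset.card_filter]
  rw [← Finset.sum_erase_add _ _ (Finset.mem_univ i),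
    ← Finset.sum_erase_add _ _ hjmem]
  ring

lemma inversions_lt_mul_swap (σ : Equiv.Perm (Fin N)) {i j : Fin N} (hij : i < j)
    (hv : σ i < σ j) : inversions σ < inversions (σ * Equiv.swap i j) := by
  classical
  set τ := σ * Equiv.swap i j with hτdef
  have hti : τ i = σ j := by simp [hτdef, mulswap_apply]
  have htj : τ j = σ i := by simp [hτdef, mulswap_apply, hij.ne']
  have hto : ∀ p, p ≠ i → p ≠ j → τ p = σ p := fun p h1 h2 => by
    simp [hτdef, mulswap_apply, h1, h2]
  set S := Finset.univ.filter (fun p : Fin N × Fin N => p.1 < p.2 ∧ σ p.2 < σ p.1) with hS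
  set T := Finset.univ.filter (fun p : Fin N × Fin N => p.1 < p.2 ∧ τ p.2 < τ p.1) with hT
  have hmemT : (i, j) ∈ T := by
    simp only [hT, Finset.mem_filter, Finset.mem_univ, true_and]
    exact ⟨hij, by rw [hti, htj]; exact hv⟩
  have hcard : S.card ≤ (T.erase (i, j)).card := by
    apply Finset.card_le_card_of_injOn
      (fun p => if p.2 = i ∧ σ p.1 ≤ σ j then (p.1, j)
        else if p.1 = j ∧ σ i ≤ σ p.2 then (i, p.2) else p)
    · rintro ⟨p, q⟩ hpq
      simp only [Finset.mem_coe, hS, Finset.mem_filter, Finset.mem_univ, true_and] at hpq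
      obtain ⟨hlt, hinv⟩ := hpq
      dsimp only
      by_cases h1 : q = i ∧ σ p ≤ σ j
      · rw [if_pos h1]
        obtain ⟨hq, hpvle⟩ := h1
        rw [hq] at hlt hinv
        have hpi : p ≠ i := ne_of_lt hlt
        have hpj' : p ≠ j := ne_of_lt (hlt.trans hij)
        refine Finset.mem_erase.mpr ⟨?_, ?_⟩
        · intro hcon
          exact hpi (congrArg Prod.fst hcon)
        · simp only [hT, Finset.mem_filter, Finset.mem_univ, true_and]
          refine ⟨hlt.trans hij, ?_⟩
          rw [htj, hto p hpi hpj']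
          exact hinv
      · rw [if_neg h1]
        by_cases h2 : p = j ∧ σ i ≤ σ q
        · rw [if_pos h2]
          obtain ⟨hp, hivle⟩ := h2
          rw [hp] at hlt hinv
          have hqj : q ≠ j := ne_of_gt hlt
          have hqi : q ≠ i := ne_of_gt (hij.trans hlt)
          refine Finset.mem_erase.mpr ⟨?_, ?_⟩
          · intro hcon
            exact hqj (congrArg Prod.snd hcon)
          · simp only [hT, Finset.mem_filter, Finset.mem_univ, true_and]
            refine ⟨hij.trans hlt, ?_⟩
            rw [hti, hto q hqi hqj]
            exact hinv
        · rw [if_neg h2]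
          have hpqne : ¬(p = i ∧ q = j) := by
            rintro ⟨rfl, rfl⟩
            exact absurd hinv (not_lt.2 hv.le)
          refine Finset.mem_erase.mpr ⟨?_, ?_⟩
          · intro hcon
            exact hpqne ⟨congrArg Prod.fst hcon, congrArg Prod.snd hcon⟩
          · simp only [hT, Finset.mem_filter, Finset.mem_univ, true_and]
            refine ⟨hlt, ?_⟩
            by_cases hqi : q = i
            · subst hqi
              have hpvgt : σ j < σ p := not_le.1 (fun hc => h1 ⟨rfl, hc⟩)
              have hpi : p ≠ q := ne_of_lt hlt
              have hpj' : p ≠ j := ne_of_lt (hlt.trans hij)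
              rw [hti, hto p hpi hpj']
              exact hpvgt
            · by_cases hpj2 : p = j
              · subst hpj2
                have hqvlt : σ q < σ i := not_le.1 (fun hc => h2 ⟨rfl, hc⟩)
                have hqj : q ≠ p := ne_of_gt hlt
                rw [htj, hto q hqi hqj]
                exact hqvlt
              · by_cases hpi : p = i
                · subst hpi
                  have hqj : q ≠ j := fun hc => hpqne ⟨rfl, hc⟩
                  rw [hti, hto q hqi hqj]
                  exact hinv.trans hv
                · by_cases hqj : q = j
                  · subst hqj
                    rw [htj, hto p hpi hpj2]
                    exact hv.trans hinv
                  · rw [hto q hqi hqj, hto p hpi hpj2]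
                    exact hinv
    · intro a ha b hb hfe
      simp only [Finset.coe_filter, Set.mem_setOf_eq, hS, Finset.mem_filter,
        Finset.mem_univ, true_and] at ha hb
      obtain ⟨p, q⟩ := a
      obtain ⟨p', q'⟩ := b
      obtain ⟨hlt, hinv⟩ := ha
      obtain ⟨hlt', hinv'⟩ := hb
      dsimp only at hfe ⊢
      by_cases h1 : q = i ∧ σ p ≤ σ j
      · rw [if_pos h1] at hfe
        by_cases h1' : q' = i ∧ σ p' ≤ σ j
        · rw [if_pos h1'] at hfe
          have : p = p' := congrArg Prod.fst hfe
          rw [this, h1.1, h1'.1]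
        · rw [if_neg h1'] at hfe
          by_cases h2' : p' = j ∧ σ i ≤ σ q'
          · rw [if_pos h2'] at hfe
            exfalso
            have hpi : p = i := congrArg Prod.fst hfe
            rw [h1.1, ← hpi] at hlt
            exact lt_irrefl p hlt
          · rw [if_neg h2'] at hfe
            exfalso
            have hq'j : q' = j := (congrArg Prod.snd hfe).symm
            have hp' : p = p' := congrArg Prod.fst hfe
            rw [hq'j, ← hp'] at hinv'
            exact absurd h1.2 (not_le.2 hinv')
      · rw [if_neg h1] at hfe
        by_cases h2 : p = j ∧ σ i ≤ σ q
        · rw [if_pos h2] at hfe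
          by_cases h1' : q' = i ∧ σ p' ≤ σ j
          · rw [if_pos h1'] at hfe
            exfalso
            have hqj : q = j := congrArg Prod.snd hfe
            rw [h2.1, ← hqj] at hlt
            exact lt_irrefl q hlt
          · rw [if_neg h1'] at hfe
            by_cases h2' : p' = j ∧ σ i ≤ σ q'
            · rw [if_pos h2'] at hfe
              have : q = q' := congrArg Prod.snd hfe
              rw [this, h2.1, h2'.1]
            · rw [if_neg h2'] at hfe
              exfalso
              have hp'i : p' = i := (congrArg Prod.fst hfe).symm
              have hq' : q = q' := congrArg Prod.snd hfe
              rw [hp'i, ← hq'] at hinv'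
              exact absurd h2.2 (not_le.2 hinv')
        · rw [if_neg h2] at hfe
          by_cases h1' : q' = i ∧ σ p' ≤ σ j
          · rw [if_pos h1'] at hfe
            exfalso
            have hqj : q = j := congrArg Prod.snd hfe
            have hp : p = p' := congrArg Prod.fst hfe
            rw [hqj, hp] at hinv
            exact absurd h1'.2 (not_le.2 hinv)
          · rw [if_neg h1'] at hfe
            by_cases h2' : p' = j ∧ σ i ≤ σ q'
            · rw [if_pos h2'] at hfe
              exfalso
              have hpi : p = i := congrArg Prod.fst hfe
              have hq : q = q' := congrArg Prod.snd hfe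
              rw [hpi, hq] at hinv
              exact absurd h2'.2 (not_le.2 hinv)
            · rw [if_neg h2'] at hfe
              exact hfe
  have hfin : (T.erase (i, j)).card < T.card := Finset.card_erase_lt_of_mem hmemT
  exact lt_of_le_of_lt hcard hfin

lemma step_norm_aux (σ : Equiv.Perm (Fin N)) {i j : Fin N} (hij : i < j) (hne2 : σ i ≠ σ j)
    (hle : inversions σ ≤ inversions (σ * Equiv.swap i j)) : σ i < σ j := by
  rcases hne2.lt_or_gt with hv | hv
  · exact hv
  · exfalso
    have hti : (σ * Equiv.swap i j) i = σ j := by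
      simp [mulswap_apply]
    have htj : (σ * Equiv.swap i j) j = σ i := by
      simp [mulswap_apply, hij.ne']
    have hkey := inversions_lt_mul_swap (σ * Equiv.swap i j) hij (by rw [hti, htj]; exact hv)
    rw [mul_assoc, Equiv.swap_mul_self, mul_one] at hkey
    omega

lemma step_norm {σ τ : Equiv.Perm (Fin N)} (h : bruhatStep σ τ) :
    ∃ i j : Fin N, i < j ∧ σ i < σ j ∧ τ = σ * Equiv.swap i j := by
  obtain ⟨i, j, hne, rfl, hle⟩ := h
  have hne2 : σ i ≠ σ j := fun hcon => hne (σ.injective hcon)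
  rcases hne.lt_or_gt with hij | hij
  · exact ⟨i, j, hij, step_norm_aux σ hij hne2 hle, rfl⟩
  · rw [Equiv.swap_comm] at hle ⊢
    exact ⟨j, i, hij, step_norm_aux σ hij hne2.symm hle, rfl⟩

lemma erase_agree (σ : Equiv.Perm (Fin N)) (i j : Fin N) :
    ∀ p ∈ (Finset.univ.erase i).erase j, (σ * Equiv.swap i j) p = σ p := by
  intro p hp
  simp only [Finset.mem_erase] at hp
  rw [mulswap_apply, if_neg hp.2.1, if_neg hp.1]

lemma Fm_le (σ : Equiv.Perm (Fin N)) {i j : Fin N} (hij : i < j) (hv : σ i < σ j) :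
    Fm σ ≤ Fm (σ * Equiv.swap i j) + 1 := by
  classical
  have hne : i ≠ j := hij.ne
  unfold Fm
  rw [card_filter_pair_split (fun p => σ p ≠ p) hne,
    card_filter_pair_split (fun p => (σ * Equiv.swap i j) p ≠ p) hne]
  have hfe : ((Finset.univ.erase i).erase j).filter (fun p => (σ * Equiv.swap i j) p ≠ p)
      = ((Finset.univ.erase i).erase j).filter (fun p => σ p ≠ p) :=
    Finset.filter_congr (fun p hp => by rw [erase_agree σ i j p hp])
  rw [hfe]
  have e1 : (σ * Equiv.swap i j) i = σ j := by simp [mulswap_apply]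
  have e2 : (σ * Equiv.swap i j) j = σ i := by simp [mulswap_apply, hij.ne']
  simp only [e1, e2, ne_eq, Fin.ext_iff]
  have hij' : (i : ℕ) < (j : ℕ) := hij
  have hv' : ((σ i : Fin N) : ℕ) < ((σ j : Fin N) : ℕ) := hv
  split_ifs <;> omega

lemma cc_le (σ : Equiv.Perm (Fin N)) {i j : Fin N} (hij : i < j) (hv : σ i < σ j) (m : ℕ) :
    cc m σ ≤ cc m (σ * Equiv.swap i j) := by
  classical
  have hne : i ≠ j := hij.ne
  unfold cc
  rw [card_filter_pair_split (fun p : Fin N => (p : ℕ) < m ∧ m ≤ (σ p : ℕ)) hne,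
    card_filter_pair_split (fun p : Fin N => (p : ℕ) < m ∧ m ≤ ((σ * Equiv.swap i j) p : ℕ)) hne]
  have hfe : ((Finset.univ.erase i).erase j).filter
        (fun p : Fin N => (p : ℕ) < m ∧ m ≤ ((σ * Equiv.swap i j) p : ℕ))
      = ((Finset.univ.erase i).erase j).filter
        (fun p : Fin N => (p : ℕ) < m ∧ m ≤ (σ p : ℕ)) :=
    Finset.filter_congr (fun p hp => by rw [erase_agree σ i j p hp])
  rw [hfe]
  have e1 : (σ * Equiv.swap i j) i = σ j := by simp [mulswap_apply]
  have e2 : (σ * Equiv.swap i j) j = σ i := by simp [mulswap_apply, hij.ne']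
  simp only [e1, e2]
  have hij' : (i : ℕ) < (j : ℕ) := hij
  have hv' : ((σ i : Fin N) : ℕ) < ((σ j : Fin N) : ℕ) := hv
  split_ifs <;> omega

lemma swap_or_of_Fm_lt (σ : Equiv.Perm (Fin N)) {i j : Fin N} (hij : i < j) (hv : σ i < σ j)
    (hF : Fm (σ * Equiv.swap i j) < Fm σ) : σ j = i ∨ σ i = j := by
  classical
  by_contra hcon
  push_neg at hcon
  have hne : i ≠ j := hij.ne
  have hge : Fm σ ≤ Fm (σ * Equiv.swap i j) := by
    unfold Fm
    rw [card_filter_pair_split (fun p => σ p ≠ p) hne,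
      card_filter_pair_split (fun p => (σ * Equiv.swap i j) p ≠ p) hne]
    have hfe : ((Finset.univ.erase i).erase j).filter (fun p => (σ * Equiv.swap i j) p ≠ p)
        = ((Finset.univ.erase i).erase j).filter (fun p => σ p ≠ p) :=
      Finset.filter_congr (fun p hp => by rw [erase_agree σ i j p hp])
    rw [hfe]
    have e1 : (σ * Equiv.swap i j) i = σ j := by simp [mulswap_apply]
    have e2 : (σ * Equiv.swap i j) j = σ i := by simp [mulswap_apply, hij.ne']
    simp only [e1, e2, ne_eq, Fin.ext_iff]
    have h1 : ((σ j : Fin N) : ℕ) ≠ (i : ℕ) := fun hc => hcon.1 (Fin.ext hc)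
    have h2 : ((σ i : Fin N) : ℕ) ≠ (j : ℕ) := fun hc => hcon.2 (Fin.ext hc)
    split_ifs <;> omega
  omega

lemma cc_eq_of_Fm_lt (σ : Equiv.Perm (Fin N)) {i j : Fin N} (hij : i < j) (hv : σ i < σ j)
    (hF : Fm (σ * Equiv.swap i j) < Fm σ) (m : ℕ) :
    cc m σ = cc m (σ * Equiv.swap i j) := by
  classical
  have hne : i ≠ j := hij.ne
  unfold cc
  rw [card_filter_pair_split (fun p : Fin N => (p : ℕ) < m ∧ m ≤ (σ p : ℕ)) hne,
    card_filter_pair_split (fun p : Fin N => (p : ℕ) < m ∧ m ≤ ((σ * Equiv.swap i j) p : ℕ)) hne]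
  have hfe : ((Finset.univ.erase i).erase j).filter
        (fun p : Fin N => (p : ℕ) < m ∧ m ≤ ((σ * Equiv.swap i j) p : ℕ))
      = ((Finset.univ.erase i).erase j).filter
        (fun p : Fin N => (p : ℕ) < m ∧ m ≤ (σ p : ℕ)) :=
    Finset.filter_congr (fun p hp => by rw [erase_agree σ i j p hp])
  rw [hfe]
  have e1 : (σ * Equiv.swap i j) i = σ j := by simp [mulswap_apply]
  have e2 : (σ * Equiv.swap i j) j = σ i := by simp [mulswap_apply, hij.ne']
  simp only [e1, e2]
  have hij' : (i : ℕ) < (j : ℕ) := hij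
  have hv' : ((σ i : Fin N) : ℕ) < ((σ j : Fin N) : ℕ) := hv
  rcases swap_or_of_Fm_lt σ hij hv hF with hd | hd
  · have hd' : ((σ j : Fin N) : ℕ) = (i : ℕ) := by rw [hd]
    split_ifs <;> omega
  · have hd' : ((σ i : Fin N) : ℕ) = (j : ℕ) := by rw [hd]
    split_ifs <;> omega

lemma even_card_invol {α : Type*} [DecidableEq α] (g : α → α) (s : Finset α)
    (h1 : ∀ a ∈ s, g a ∈ s) (h2 : ∀ a ∈ s, g (g a) = a) (h3 : ∀ a ∈ s, g a ≠ a) :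
    Even s.card := by
  classical
  revert h1 h2 h3
  induction s using Finset.strongInduction with
  | _ s ih =>
    intro h1 h2 h3
    rcases s.eq_empty_or_nonempty with rfl | ⟨a, ha⟩
    · simp
    · have hga : g a ∈ s := h1 a ha
      have hne : g a ≠ a := h3 a ha
      have hga' : g a ∈ s.erase a := Finset.mem_erase.mpr ⟨hne, hga⟩
      set t := (s.erase a).erase (g a) with ht
      have hmem_t : ∀ x ∈ t, x ∈ s ∧ x ≠ g a ∧ x ≠ a := by
        intro x hx
        rw [ht, Finset.mem_erase, Finset.mem_erase] at hx
        exact ⟨hx.2.2, hx.1, hx.2.1⟩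
      have h1t : ∀ x ∈ t, g x ∈ t := by
        intro x hx
        obtain ⟨hxs, hxga, hxa⟩ := hmem_t x hx
        rw [ht, Finset.mem_erase, Finset.mem_erase]
        refine ⟨?_, ?_, h1 x hxs⟩
        · intro hc
          apply hxa
          rw [← h2 x hxs, hc, h2 a ha]
        · intro hc
          apply hxga
          rw [← h2 x hxs, hc]
      have h2t : ∀ x ∈ t, g (g x) = x := fun x hx => h2 x (hmem_t x hx).1
      have h3t : ∀ x ∈ t, g x ≠ x := fun x hx => h3 x (hmem_t x hx).1
      have hts : t ⊂ s :=
        Finset.ssubset_of_subset_of_ssubset (Finset.erase_subset _ _) (Finset.erase_ssubset ha)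
      have hrec := ih t hts h1t h2t h3t
      have hct : t.card = s.card - 2 := by
        rw [ht, Finset.card_erase_of_mem hga', Finset.card_erase_of_mem ha]
        omega
      have hcard2 : 2 ≤ s.card := Finset.one_lt_card.mpr ⟨a, ha, g a, hga, hne.symm⟩
      obtain ⟨k, hk⟩ := hrec
      exact ⟨k + 1, by omega⟩

lemma parity_even {s : Equiv.Perm (Fin N)} (hs : s * s = 1) :
    Even (inversions s + exced s) := by
  classical
  have hss : ∀ p, s (s p) = p := fun p => by
    rw [← Equiv.Perm.mul_apply, hs, Equiv.Perm.one_apply]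
  set I := Finset.univ.filter (fun p : Fin N × Fin N => p.1 < p.2 ∧ s p.2 < s p.1) with hI
  have hsplit := Finset.card_filter_add_card_filter_not
    (s := I) (p := fun p : Fin N × Fin N => s p.1 = p.2)
  have hfix : (I.filter (fun p : Fin N × Fin N => s p.1 = p.2)).card = exced s := by
    unfold exced
    apply Finset.card_bij' (i := fun p _ => p.1) (j := fun x _ => (x, s x))
    · intro p hp
      simp only [hI, Finset.mem_filter, Finset.mem_univ, true_and] at hp
      simp only [Finset.mem_filter, Finset.mem_univ, true_and]
      rw [hp.2]
      exact hp.1.1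
    · intro x hx
      simp only [Finset.mem_filter, Finset.mem_univ, true_and] at hx
      simp only [hI, Finset.mem_filter, Finset.mem_univ, true_and]
      refine ⟨⟨hx, ?_⟩, trivial⟩
      rw [hss x]
      exact hx
    · intro p hp
      simp only [hI, Finset.mem_filter, Finset.mem_univ, true_and] at hp
      rw [hp.2]
    · intro x hx
      rfl
  have heven : Even ((I.filter (fun p : Fin N × Fin N => ¬ s p.1 = p.2)).card) := by
    apply even_card_invol (g := fun p : Fin N × Fin N => (s p.2, s p.1))
    · intro a haa
      simp only [hI, Finset.mem_filter, Finset.mem_univ, true_and] at haa ⊢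
      obtain ⟨⟨hlt, hinvv⟩, hne⟩ := haa
      refine ⟨⟨hinvv, ?_⟩, ?_⟩
      · rw [hss, hss]
        exact hlt
      · rw [hss]
        exact fun hc => hne hc.symm
    · intro a _
      simp [hss]
    · intro a haa
      simp only [hI, Finset.mem_filter, Finset.mem_univ, true_and] at haa
      intro hc
      exact haa.2 ((congrArg Prod.snd hc).symm ▸ rfl)
  have hinvcard : inversions s = I.card := rfl
  obtain ⟨k, hk⟩ := heven
  exact ⟨exced s + k, by omega⟩

lemma Fm_eq_two_mul_exced {s : Equiv.Perm (Fin N)} (hs : s * s = 1) :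
    Fm s = 2 * exced s := by
  classical
  have hss : ∀ p, s (s p) = p := fun p => by
    rw [← Equiv.Perm.mul_apply, hs, Equiv.Perm.one_apply]
  have hunion : Finset.univ.filter (fun p : Fin N => s p ≠ p)
      = Finset.univ.filter (fun p : Fin N => p < s p) ∪
        Finset.univ.filter (fun p : Fin N => s p < p) := by
    ext p
    simp only [Finset.mem_filter, Finset.mem_univ, true_and, Finset.mem_union, ne_eq]
    rw [← ne_eq, ne_iff_lt_or_gt]
    exact or_comm
  have hdisj : Disjoint (Finset.univ.filter (fun p : Fin N => p < s p))
      (Finset.univ.filter (fun p : Fin N => s p < p)) := by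
    rw [Finset.disjoint_left]
    intro p hp1 hp2
    simp only [Finset.mem_filter, Finset.mem_univ, true_and] at hp1 hp2
    exact absurd hp2 (not_lt.2 hp1.le)
  have hanti : (Finset.univ.filter (fun p : Fin N => s p < p)).card
      = (Finset.univ.filter (fun p : Fin N => p < s p)).card := by
    apply Finset.card_bij' (i := fun p _ => s p) (j := fun x _ => s x)
    · intro p hp
      simp only [Finset.mem_filter, Finset.mem_univ, true_and] at hp ⊢
      rw [hss]
      exact hp
    · intro x hx
      simp only [Finset.mem_filter, Finset.mem_univ, true_and] at hx ⊢
      rw [hss]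
      exact hx
    · intro p hp
      exact hss p
    · intro x hx
      exact hss x
  unfold Fm exced
  rw [hunion, Finset.card_union_of_disjoint hdisj, hanti]
  ring

lemma cc_succ_iff {t : Equiv.Perm (Fin N)} (hss : ∀ p, t (t p) = p) (x : Fin N) :
    x < t x ↔ cc (x : ℕ) t < cc ((x : ℕ) + 1) t := by
  classical
  set B := Finset.univ.filter (fun p : Fin N => (p : ℕ) < (x : ℕ) ∧ (x : ℕ) < (t p : ℕ)) with hB
  have hxB : x ∉ B := by simp [hB]
  have htxB : t x ∉ B := by
    simp only [hB, Finset.mem_filter, Finset.mem_univ, true_and, hss, not_and]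
    intro _
    omega
  have hA : Finset.univ.filter
        (fun p : Fin N => (p : ℕ) < (x : ℕ) + 1 ∧ (x : ℕ) + 1 ≤ (t p : ℕ))
      = if (x : ℕ) < (t x : ℕ) then insert x B else B := by
    split_ifs with hx
    · ext p
      simp only [hB, Finset.mem_filter, Finset.mem_univ, true_and, Finset.mem_insert]
      constructor
      · rintro ⟨hp1, hp2⟩
        rcases eq_or_ne p x with rfl | hne
        · exact Or.inl rfl
        · have : (p : ℕ) ≠ (x : ℕ) := fun hc => hne (Fin.ext hc)
          right
          omega
      · rintro (rfl | ⟨hp1, hp2⟩) <;> omega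
    · ext p
      simp only [hB, Finset.mem_filter, Finset.mem_univ, true_and]
      constructor
      · rintro ⟨hp1, hp2⟩
        have hne : (p : ℕ) ≠ (x : ℕ) := by
          intro hc
          have : p = x := Fin.ext hc
          subst this
          omega
        omega
      · rintro ⟨hp1, hp2⟩
        omega
  have hBeq : Finset.univ.filter
        (fun p : Fin N => (p : ℕ) < (x : ℕ) ∧ (x : ℕ) ≤ (t p : ℕ))
      = if (t x : ℕ) < (x : ℕ) then insert (t x) B else B := by
    split_ifs with hx
    · ext p
      simp only [hB, Finset.mem_filter, Finset.mem_univ, true_and, Finset.mem_insert]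
      constructor
      · rintro ⟨hp1, hp2⟩
        rcases eq_or_ne ((t p : ℕ)) ((x : ℕ)) with hc | hc
        · left
          have htp : t p = x := Fin.ext hc
          have := congrArg t htp
          rw [hss] at this
          exact this
        · right
          omega
      · rintro (rfl | ⟨hp1, hp2⟩)
        · rw [hss]
          omega
        · omega
    · ext p
      simp only [hB, Finset.mem_filter, Finset.mem_univ, true_and]
      constructor
      · rintro ⟨hp1, hp2⟩
        have hne : (t p : ℕ) ≠ (x : ℕ) := by
          intro hc
          have htp : t p = x := Fin.ext hc
          have hptx := congrArg t htp
          rw [hss] at hptx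
          rw [hptx] at hp1
          omega
        omega
      · rintro ⟨hp1, hp2⟩
        omega
  have hccA : cc ((x : ℕ) + 1) t
      = (if (x : ℕ) < (t x : ℕ) then insert x B else B).card := by
    rw [← hA]; rfl
  have hccB : cc (x : ℕ) t
      = (if (t x : ℕ) < (x : ℕ) then insert (t x) B else B).card := by
    rw [← hBeq]; rfl
  have hxlt : (x < t x) ↔ ((x : ℕ) < (t x : ℕ)) := Iff.rfl
  rw [hxlt, hccA, hccB]
  rcases lt_trichotomy ((x : ℕ)) ((t x : ℕ)) with h | h | h
  · rw [if_pos h, if_neg (show ¬ ((t x : ℕ) < (x : ℕ)) by omega),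
      Finset.card_insert_of_notMem hxB]
    omega
  · rw [if_neg (show ¬ ((x : ℕ) < (t x : ℕ)) by omega),
      if_neg (show ¬ ((t x : ℕ) < (x : ℕ)) by omega)]
    omega
  · rw [if_neg (show ¬ ((x : ℕ) < (t x : ℕ)) by omega), if_pos h,
      Finset.card_insert_of_notMem htxB]
    omega

lemma exced_eq_of_cc {t t' : Equiv.Perm (Fin N)} (ht : t * t = 1) (ht' : t' * t' = 1)
    (h : ∀ m : ℕ, cc m t = cc m t') : exced t = exced t' := by
  classical
  have hss : ∀ p, t (t p) = p := fun p => by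
    rw [← Equiv.Perm.mul_apply, ht, Equiv.Perm.one_apply]
  have hss' : ∀ p, t' (t' p) = p := fun p => by
    rw [← Equiv.Perm.mul_apply, ht', Equiv.Perm.one_apply]
  have e1 : exced t
      = (Finset.univ.filter (fun x : Fin N => cc (x : ℕ) t < cc ((x : ℕ) + 1) t)).card :=
    congrArg Finset.card (Finset.filter_congr fun x _ => cc_succ_iff hss x)
  have e2 : exced t'
      = (Finset.univ.filter (fun x : Fin N => cc (x : ℕ) t' < cc ((x : ℕ) + 1) t')).card :=
    congrArg Finset.card (Finset.filter_congr fun x _ => cc_succ_iff hss' x)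
  rw [e1, e2]
  simp only [h]

lemma chain_inversions_le {σ τ : Equiv.Perm (Fin N)} (h : bruhatLE σ τ) :
    inversions σ ≤ inversions τ := by
  induction h with
  | refl => exact le_rfl
  | tail _ hstep ih =>
    obtain ⟨i, j, hij, hv, rfl⟩ := step_norm hstep
    exact ih.trans (inversions_lt_mul_swap _ hij hv).le

lemma chain_inversions_lt {σ τ : Equiv.Perm (Fin N)} (h : bruhatLE σ τ) (hne : σ ≠ τ) :
    inversions σ < inversions τ := by
  rcases h.cases_tail with rfl | ⟨c, hc, hstep⟩
  · exact absurd rfl hne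
  · obtain ⟨i, j, hij, hv, rfl⟩ := step_norm hstep
    exact (chain_inversions_le hc).trans_lt (inversions_lt_mul_swap _ hij hv)

lemma chain_H_le {σ τ : Equiv.Perm (Fin N)} (h : bruhatLE σ τ) :
    inversions σ + Fm σ ≤ inversions τ + Fm τ := by
  induction h with
  | refl => exact le_rfl
  | tail _ hstep ih =>
    obtain ⟨i, j, hij, hv, rfl⟩ := step_norm hstep
    have h1 := inversions_lt_mul_swap _ hij hv
    have h2 := Fm_le _ hij hv
    omega

lemma chain_cc_eq {σ τ : Equiv.Perm (Fin N)} (h : bruhatLE σ τ)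
    (hH : inversions σ + Fm σ = inversions τ + Fm τ) (m : ℕ) :
    cc m σ = cc m τ := by
  induction h with
  | refl => rfl
  | @tail ρ τ hchain hstep ih =>
    obtain ⟨i, j, hij, hv, rfl⟩ := step_norm hstep
    have h1 := inversions_lt_mul_swap ρ hij hv
    have h2 := Fm_le ρ hij hv
    have h3 := chain_H_le hchain
    have hmid : inversions σ + Fm σ = inversions ρ + Fm ρ := by omega
    have hF : Fm (ρ * Equiv.swap i j) < Fm ρ := by omega
    rw [ih hmid, cc_eq_of_Fm_lt ρ hij hv hF m]

end Aux

/-- For involutions s ≤_B s' with involution length difference 1, the difference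
of Coxeter lengths (inversion numbers) is 1, 2 or 3. -/
theorem inv_diff_of_lI_succ {N : ℕ} (s s' : Equiv.Perm (Fin N))
    (hs : s * s = 1) (hs' : s' * s' = 1)
    (h : bruhatLE s s') (hlen : lI s + 1 = lI s') :
    inversions s' - inversions s = 1 ∨ inversions s' - inversions s = 2 ∨
      inversions s' - inversions s = 3 := by
  classical
  obtain ⟨k, hk⟩ := parity_even hs
  obtain ⟨k', hk'⟩ := parity_even hs'
  simp only [lI] at hlen
  have hne : s ≠ s' := by
    intro e
    rw [e] at hlen
    omega
  have hlt : inversions s < inversions s' := chain_inversions_lt h hne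
  have hH : inversions s + Fm s ≤ inversions s' + Fm s' := chain_H_le h
  rw [Fm_eq_two_mul_exced hs, Fm_eq_two_mul_exced hs'] at hH
  by_cases hD : inversions s' ≤ inversions s + 3
  · omega
  · exfalso
    have hHeq : inversions s + Fm s = inversions s' + Fm s' := by
      rw [Fm_eq_two_mul_exced hs, Fm_eq_two_mul_exced hs']
      omega
    have hcc := fun m => chain_cc_eq h hHeq m
    have hexc := exced_eq_of_cc hs hs' hcc
    omega
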